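/- Let k be a positive even integer. If there exists a k-avoiding odd-even sequence, then for every integer ℓ ≥ 0 there exists a (k + 2ℓ)-avoiding odd-even sequence. -/

import Mathlib

/-- A two-sided sequence of integers is *odd-even* if `a i ≡ i (mod 2)` for all `i`. -/
def IsOddEvenSeq (a : ℤ → ℤ) : Prop :=
  ∀ i : ℤ, a i ≡ i [ZMOD 2]

/-- For a positive even integer `k`, a two-sided sequence `a : ℤ → ℤ` of positive
integers is *`k`-avoiding* if `a i ≤ k / 2` for all `i` and
`a i + a j + |i − j| ≠ k` for all `i ≠ j`. -/
def IsKAvoiding (k : ℤ) (a : ℤ → ℤ) : Prop :=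
  (∀ i : ℤ, 0 < a i) ∧ (∀ i : ℤ, a i ≤ k / 2) ∧
    (∀ i j : ℤ, i ≠ j → a i + a j + |i - j| ≠ k)

lemma step_up (m : ℤ) (hm : Even m)
    (h : ∃ a : ℤ → ℤ, IsOddEvenSeq a ∧ IsKAvoiding m a) :
    ∃ a : ℤ → ℤ, IsOddEvenSeq a ∧ IsKAvoiding (m + 2) a := by
  obtain ⟨a, hoe, h1, h2, h3⟩ := h
  obtain ⟨r, hr⟩ := hm
  refine ⟨fun i => a (i - 1) + 1, ?_, ?_, ?_, ?_⟩
  · intro i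
    have := (hoe (i - 1)).add_right 1
    simpa using this
  · intro i
    simp only []
    have := h1 (i - 1)
    omega
  · intro i
    simp only []
    have := h2 (i - 1)
    omega
  · intro i j hij hcon
    simp only [] at hcon
    have hd : |i - j| = |(i - 1) - (j - 1)| := by ring_nf
    apply h3 (i - 1) (j - 1) (by omega)
    rw [hd] at hcon
    omega

theorem stepping_up_avoiding_sequences (k : ℤ) (hk : 0 < k) (hke : Even k)
    (h : ∃ a : ℤ → ℤ, IsOddEvenSeq a ∧ IsKAvoiding k a) :
    ∀ ℓ : ℤ, 0 ≤ ℓ → ∃ a : ℤ → ℤ, IsOddEvenSeq a ∧ IsKAvoiding (k + 2 * ℓ) a := by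
  intro ℓ hℓ
  refine Int.le_induction (motive := fun l _ => ∃ a : ℤ → ℤ, IsOddEvenSeq a ∧ IsKAvoiding (k + 2 * l) a) ?_ ?_ ℓ hℓ
  · simpa using h
  · intro n hn ih
    have heven : Even (k + 2 * n) := by
      obtain ⟨r, hr⟩ := hke
      exact ⟨r + n, by omega⟩
    have := step_up (k + 2 * n) heven ih
    have heq : k + 2 * (n + 1) = k + 2 * n + 2 := by ring
    rwa [heq]
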